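/- Let A be a finite subset of a real vector space V with |A| = k ≥ 2, let S(A) be the subsemigroup of V generated by A, let K = conv(A), and let K' = conv((k-1)∗A) = (k-1)K. Then for every pair of integers r ≥ 2 and h ≥ 1 there exists a set X_{r,h} ⊆ S(h∗A) ⊆ S(A) such that |X_{r,h}| ≤ b(r,k), rhK ⊆ (1/(k-1))∗X_{r,h} + hK, and rhK' ⊆ X_{r,h} + hK'. In particular, K and K' are asymptotic (r, b(r,k))-approximate groups for all r ≥ 2. -/

import Mathlib

open Pointwise

/-- The `h`-fold sumset `hA = {a₁ + ⋯ + a_h : aᵢ ∈ A}`. -/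
def hsum {V : Type*} [AddCommMonoid V] (h : ℕ) (A : Set V) : Set V :=
  {z | ∃ f : Fin h → V, (∀ i, f i ∈ A) ∧ z = ∑ i, f i}

/-- The subsemigroup `S(A) = ⋃_{h ≥ 1} hA` generated by `A`. -/
def semigroupGen {V : Type*} [AddCommMonoid V] (A : Set V) : Set V :=
  ⋃ h ∈ Set.Ici (1 : ℕ), hsum h A

/-- The binomial coefficient `b(r,k) = C((r+1)(k-1)-1, k-1)`. -/
def b (r k : ℕ) : ℕ := Nat.choose ((r + 1) * (k - 1) - 1) (k - 1)

section Aux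
variable {V : Type*} [AddCommMonoid V]

lemma hsum_zero (S : Set V) : hsum 0 S = {0} := by
  ext x
  simp [hsum, Set.eq_singleton_iff_unique_mem]

lemma add_mem_hsum {S : Set V} {m n : ℕ} {x y : V}
    (hx : x ∈ hsum m S) (hy : y ∈ hsum n S) : x + y ∈ hsum (m + n) S := by
  obtain ⟨f, hf, rfl⟩ := hx
  obtain ⟨g, hg, rfl⟩ := hy
  refine ⟨Fin.append f g, ?_, ?_⟩
  · intro i
    refine Fin.addCases (fun j => ?_) (fun j => ?_) i
    · simpa using hf j
    · simpa using hg j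
  · rw [Fin.sum_univ_add]
    simp

lemma nsmul_mem_hsum {S : Set V} {x : V} (hx : x ∈ S) (n : ℕ) : n • x ∈ hsum n S := by
  induction n with
  | zero => simp [hsum_zero]
  | succ n ih =>
    rw [succ_nsmul]
    exact add_mem_hsum ih ⟨fun _ => x, fun _ => hx, by simp⟩

lemma sum_mem_hsum {ι : Type*} (s : Finset ι) (c : ι → ℕ) (g : ι → V) (S : Set V)
    (hg : ∀ i ∈ s, g i ∈ hsum (c i) S) :
    (∑ i ∈ s, g i) ∈ hsum (∑ i ∈ s, c i) S := by
  induction s using Finset.cons_induction with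
  | empty => simp [hsum_zero]
  | cons i s hi ih =>
    rw [Finset.sum_cons, Finset.sum_cons]
    exact add_mem_hsum (hg i (by simp)) (ih fun j hj => hg j (by simp [hj]))

lemma mem_semigroupGen {S : Set V} {x : V} {n : ℕ} (hn : 1 ≤ n) (hx : x ∈ hsum n S) :
    x ∈ semigroupGen S :=
  Set.mem_biUnion hn hx

end Aux

lemma exists_le_sum {ι : Type*} [DecidableEq ι] (s : Finset ι) (q : ι → ℕ) (m : ℕ)
    (hm : m ≤ ∑ i ∈ s, q i) : ∃ n : ι → ℕ, (∀ i, n i ≤ q i) ∧ ∑ i ∈ s, n i = m := by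
  induction s using Finset.induction generalizing m with
  | empty => exact ⟨0, fun i => Nat.zero_le _, by simp at hm ⊢; omega⟩
  | @insert i s hi ih =>
    rw [Finset.sum_insert hi] at hm
    obtain ⟨n, hn, hns⟩ := ih (m - min m (q i)) (by omega)
    refine ⟨Function.update n i (min m (q i)), fun j => ?_, ?_⟩
    · rcases eq_or_ne j i with rfl | hj
      · simp
      · simp [Function.update_of_ne hj]
        exact hn j
    · rw [Finset.sum_insert hi, Function.update_self, Finset.sum_update_of_notMem hi, hns]
      omega

section Char
variable {V : Type*} [AddCommGroup V] [Module ℝ V]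

lemma hsum_image_smul (c : ℝ) (n : ℕ) (S : Set V) :
    hsum n ((fun x => c • x) '' S) = (fun x => c • x) '' hsum n S := by
  ext x
  constructor
  · rintro ⟨f, hf, rfl⟩
    choose g hg hfg using hf
    refine ⟨∑ i, g i, ⟨g, hg, rfl⟩, ?_⟩
    show c • ∑ i, g i = ∑ i, f i
    rw [Finset.smul_sum]
    exact Finset.sum_congr rfl fun i _ => (hfg i)
  · rintro ⟨y, ⟨f, hf, rfl⟩, rfl⟩
    exact ⟨fun i => c • f i, fun i => ⟨f i, hf i, rfl⟩, by
      show c • ∑ i, f i = _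
      rw [Finset.smul_sum]⟩

lemma convexHull_range_eq {k : ℕ} (a : Fin k → V) :
    convexHull ℝ (Set.range a) =
      {x | ∃ c : Fin k → ℝ, (∀ i, 0 ≤ c i) ∧ ∑ i, c i = 1 ∧ x = ∑ i, c i • a i} := by
  apply Set.Subset.antisymm
  · apply convexHull_min
    · rintro x ⟨i, rfl⟩
      refine ⟨Pi.single i 1, fun j => ?_, ?_, ?_⟩
      · rcases eq_or_ne j i with rfl | hj
        · simp
        · simp [Pi.single_apply, hj]
      · simp [Pi.single_apply]
      · simp [Pi.single_apply, ite_smul]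
    · rintro x ⟨cx, hcx0, hcx1, rfl⟩ y ⟨cy, hcy0, hcy1, rfl⟩ s t hs ht hst
      refine ⟨fun i => s * cx i + t * cy i,
        fun i => add_nonneg (mul_nonneg hs (hcx0 i)) (mul_nonneg ht (hcy0 i)), ?_, ?_⟩
      · simp only [Finset.sum_add_distrib, ← Finset.mul_sum, hcx1, hcy1]
        simpa using hst
      · simp [add_smul, mul_smul, Finset.sum_add_distrib, Finset.smul_sum]
  · rintro x ⟨c, hc0, hc1, rfl⟩
    have := Finset.centerMass_mem_convexHull (Finset.univ) (fun i _ => hc0 i)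
      (by rw [hc1]; norm_num) (fun i _ => Set.mem_range_self (f := a) i)
    rwa [Finset.centerMass_eq_of_sum_1 _ _ hc1] at this

lemma hsum_convexHull {k : ℕ} (a : Fin k → V) (h : ℕ) (hh : 1 ≤ h) :
    hsum h (convexHull ℝ (Set.range a)) =
      {x | ∃ c : Fin k → ℝ, (∀ i, 0 ≤ c i) ∧ ∑ i, c i = (h : ℝ) ∧ x = ∑ i, c i • a i} := by
  have hh0 : (0 : ℝ) < h := by exact_mod_cast hh
  ext x
  simp only [hsum, convexHull_range_eq, Set.mem_setOf_eq]
  constructor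
  · rintro ⟨f, hf, rfl⟩
    choose w hw0 hw1 hwf using hf
    refine ⟨fun j => ∑ i, w i j, fun j => Finset.sum_nonneg fun i _ => hw0 i j, ?_, ?_⟩
    · rw [Finset.sum_comm]
      simp [hw1]
    · rw [Finset.sum_congr rfl fun i (_ : i ∈ Finset.univ) => hwf i, Finset.sum_comm]
      exact Finset.sum_congr rfl fun j _ => by rw [Finset.sum_smul]
  · rintro ⟨c, hc0, hch, rfl⟩
    refine ⟨fun _ => ∑ j, (c j / h) • a j,
      fun i => ⟨fun j => c j / h, fun j => div_nonneg (hc0 j) hh0.le,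
        by rw [← Finset.sum_div, hch, div_self hh0.ne'], rfl⟩, ?_⟩
    rw [Finset.sum_const, Finset.card_univ, Fintype.card_fin,
      ← Nat.cast_smul_eq_nsmul ℝ, Finset.smul_sum]
    exact Finset.sum_congr rfl fun j _ => by rw [smul_smul, mul_div_cancel₀ _ hh0.ne']

end Char

lemma card_bound (r k : ℕ) (hr : 2 ≤ r) (hk : 2 ≤ k) :
    (k + (r - 1) * (k - 1) - 1).choose ((r - 1) * (k - 1)) ≤ b r k := by
  obtain ⟨r', rfl⟩ : ∃ r', r = r' + 2 := ⟨r - 2, by omega⟩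
  obtain ⟨k', rfl⟩ : ∃ k', k = k' + 2 := ⟨k - 2, by omega⟩
  unfold b
  set m := (r' + 2 - 1) * (k' + 2 - 1) with hm
  set N := (r' + 2) * (k' + 1) with hN
  have hm' : m = (r' + 1) * (k' + 1) := rfl
  have h1 : k' + 2 + m - 1 = N := by
    have : N = m + (k' + 1) := by rw [hm', hN]; ring
    omega
  have h2 : m = N - (k' + 1) := by
    have : N = m + (k' + 1) := by rw [hm', hN]; ring
    omega
  have h3 : k' + 2 - 1 = k' + 1 := rfl
  rw [h1, h3]
  calc N.choose m = N.choose (N - (k' + 1)) := by rw [← h2]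
    _ = N.choose (k' + 1) := Nat.choose_symm (by
        have : N = m + (k' + 1) := by rw [hm', hN]; ring
        omega)
    _ ≤ ((r' + 2 + 1) * (k' + 2 - 1) - 1).choose (k' + 1) := by
        refine Nat.choose_le_choose _ ?_
        have : (r' + 2 + 1) * (k' + 2 - 1) = N + (k' + 1) := by
          rw [hN, show k' + 2 - 1 = k' + 1 from rfl]; ring
        omega

lemma nat_ineq (r k s : ℕ) (hr : 2 ≤ r) (hk : 2 ≤ k) (h : (k - 1) * r < s + k) :
    (r - 1) * (k - 1) ≤ s := by
  obtain ⟨r', rfl⟩ : ∃ r', r = r' + 2 := ⟨r - 2, by omega⟩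
  obtain ⟨k', rfl⟩ : ∃ k', k = k' + 2 := ⟨k - 2, by omega⟩
  have h1 : (k' + 2 - 1) * (r' + 2) = (r' + 1) * (k' + 1) + k' + 1 := by
    rw [show k' + 2 - 1 = k' + 1 from rfl]; ring
  have h2 : (r' + 2 - 1) * (k' + 2 - 1) = (r' + 1) * (k' + 1) := rfl
  omega

theorem polytope_asymptotic_approximate_group {V : Type*} [AddCommGroup V] [Module ℝ V]
    (A : Set V) (hA : A.Finite) (k : ℕ) (hk : A.ncard = k) (hk2 : 2 ≤ k)
    (K K' : Set V) (hK : K = convexHull ℝ A)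
    (hK' : K' = convexHull ℝ ((fun x => ((k : ℝ) - 1) • x) '' A)) :
    (∀ r h : ℕ, 2 ≤ r → 1 ≤ h →
      ∃ X : Finset V,
        (↑X : Set V) ⊆ semigroupGen ((fun x => (h : ℝ) • x) '' A) ∧
        semigroupGen ((fun x => (h : ℝ) • x) '' A) ⊆ semigroupGen A ∧
        X.card ≤ b r k ∧
        hsum (r * h) K ⊆ (fun x => ((k : ℝ) - 1)⁻¹ • x) '' (↑X : Set V) + hsum h K ∧
        hsum (r * h) K' ⊆ ↑X + hsum h K') ∧
    (∀ r : ℕ, 2 ≤ r → ∃ h₀ : ℕ, ∀ h : ℕ, h₀ ≤ h →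
      ∃ Y : Finset V, Y.card ≤ b r k ∧ hsum (r * h) K ⊆ ↑Y + hsum h K) ∧
    (∀ r : ℕ, 2 ≤ r → ∃ h₀ : ℕ, ∀ h : ℕ, h₀ ≤ h →
      ∃ Y : Finset V, Y.card ≤ b r k ∧ hsum (r * h) K' ⊆ ↑Y + hsum h K') := by
  classical
  have hc1pos : (0 : ℝ) < (k : ℝ) - 1 := by
    have : (2 : ℝ) ≤ (k : ℝ) := by exact_mod_cast hk2
    linarith
  -- a listing of A
  have htk : hA.toFinset.card = k := by rw [← hk]; exact (Set.ncard_eq_toFinset_card A hA).symm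
  let e' : {x // x ∈ hA.toFinset} ≃ Fin k := hA.toFinset.equivFin.trans (finCongr htk)
  set a : Fin k → V := fun i => ((e'.symm i : V)) with ha
  have hrange : Set.range a = A := by
    have h1 : Set.range a = Subtype.val '' Set.range e'.symm := Set.range_comp _ _
    rw [h1, Equiv.range_eq_univ, Set.image_univ, Subtype.range_coe_subtype]
    ext x
    simp [Set.Finite.mem_toFinset]
  have hKr : K = convexHull ℝ (Set.range a) := by rw [hK, hrange]
  have hK'c : K' = (fun y => ((k : ℝ) - 1) • y) '' K := by
    rw [hK', hK, Set.image_smul, Set.image_smul, convexHull_smul]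
  have key : ∀ r h : ℕ, 2 ≤ r → 1 ≤ h →
      ∃ X : Finset V,
        (↑X : Set V) ⊆ semigroupGen ((fun x => (h : ℝ) • x) '' A) ∧
        semigroupGen ((fun x => (h : ℝ) • x) '' A) ⊆ semigroupGen A ∧
        X.card ≤ b r k ∧
        hsum (r * h) K ⊆ (fun x => ((k : ℝ) - 1)⁻¹ • x) '' (↑X : Set V) + hsum h K ∧
        hsum (r * h) K' ⊆ ↑X + hsum h K' := by
    intro r h hr hh
    set m := (r - 1) * (k - 1) with hmdef
    have hm1 : 1 ≤ m := Nat.mul_pos (by omega) (by omega)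
    have hh0 : (0 : ℝ) < h := by exact_mod_cast hh
    set xOf : Sym (Fin k) m → V :=
      fun s => ∑ i, (h * Multiset.count i (s : Multiset (Fin k))) • a i with hxOf
    set X : Finset V := Finset.image xOf Finset.univ with hX
    have hcount : ∀ s : Sym (Fin k) m, ∑ i, Multiset.count i (s : Multiset (Fin k)) = m := by
      intro s
      rw [Multiset.sum_count_eq_card (fun x _ => Finset.mem_univ x)]
      exact s.2
    -- membership builder
    have hmemX : ∀ n : Fin k → ℕ, (∑ i, n i) = m → (∑ i, (h * n i) • a i) ∈ X := by
      intro n hn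
      have hcard : Multiset.card (Finset.univ.val.bind fun i => Multiset.replicate (n i) i)
          = m := by
        simp only [Multiset.card_bind, Function.comp]
        rw [show (Multiset.map (fun i => Multiset.card (Multiset.replicate (n i) i))
          Finset.univ.val).sum = ∑ i, Multiset.card (Multiset.replicate (n i) i) from rfl]
        simpa using hn
      refine Finset.mem_image.2 ⟨⟨_, hcard⟩, Finset.mem_univ _, ?_⟩
      simp only [hxOf]
      refine Finset.sum_congr rfl fun i _ => ?_
      congr 2
      show Multiset.count i (Finset.univ.val.bind fun j => Multiset.replicate (n j) j) = n i
      rw [Multiset.count_bind]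
      rw [show (Multiset.map (fun j => Multiset.count i (Multiset.replicate (n j) j))
        Finset.univ.val).sum = ∑ j, Multiset.count i (Multiset.replicate (n j) j) from rfl]
      simp [Multiset.count_replicate]
    -- X ⊆ S(h∗A)
    have hXsub : (↑X : Set V) ⊆ semigroupGen ((fun x => (h : ℝ) • x) '' A) := by
      intro x hx
      obtain ⟨s, -, rfl⟩ := Finset.mem_image.1 (Finset.mem_coe.1 hx)
      refine mem_semigroupGen (n := m) hm1 ?_
      have hterm : ∀ i ∈ Finset.univ, (h * Multiset.count i (s : Multiset (Fin k))) • a i ∈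
          hsum (Multiset.count i (s : Multiset (Fin k))) ((fun x => (h : ℝ) • x) '' A) := by
        intro i _
        have hai : (h : ℝ) • a i ∈ (fun x => (h : ℝ) • x) '' A :=
          ⟨a i, by rw [← hrange]; exact Set.mem_range_self i, rfl⟩
        have heq : (h * Multiset.count i (s : Multiset (Fin k))) • a i
            = Multiset.count i (s : Multiset (Fin k)) • ((h : ℝ) • a i) := by
          rw [Nat.cast_smul_eq_nsmul, smul_smul, Nat.mul_comm]
        rw [heq]
        exact nsmul_mem_hsum hai _
      have := sum_mem_hsum Finset.univ _ _ _ hterm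
      rwa [hcount s] at this
    -- S(h∗A) ⊆ S(A)
    have hGsub : semigroupGen ((fun x => (h : ℝ) • x) '' A) ⊆ semigroupGen A := by
      intro x hx
      simp only [semigroupGen, Set.mem_iUnion, Set.mem_Ici] at hx
      obtain ⟨N, hN, hxN⟩ := hx
      obtain ⟨f, hf, rfl⟩ := hxN
      refine mem_semigroupGen (n := N * h) (Nat.mul_pos (by omega) (by omega)) ?_
      have hterm : ∀ i ∈ Finset.univ, f i ∈ hsum h A := by
        intro i _
        obtain ⟨y, hy, hyf⟩ := hf i
        rw [← hyf]
        show (h : ℝ) • y ∈ hsum h A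
        rw [Nat.cast_smul_eq_nsmul]
        exact nsmul_mem_hsum hy h
      have := sum_mem_hsum Finset.univ (fun _ => h) f A hterm
      simpa [Finset.sum_const, Fintype.card_fin, mul_comm] using this
    -- cardinality
    have hcard : X.card ≤ b r k := by
      calc X.card ≤ (Finset.univ : Finset (Sym (Fin k) m)).card := Finset.card_image_le
        _ = Fintype.card (Sym (Fin k) m) := Finset.card_univ
        _ = (Fintype.card (Fin k) + m - 1).choose m := Sym.card_sym_eq_choose m
        _ = (k + m - 1).choose m := by rw [Fintype.card_fin]
        _ ≤ b r k := card_bound r k hr hk2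
    -- main inclusion for K
    have hKmain : hsum (r * h) K ⊆
        (fun x => ((k : ℝ) - 1)⁻¹ • x) '' (↑X : Set V) + hsum h K := by
      intro u hu
      rw [hKr, hsum_convexHull a (r * h) (Nat.mul_pos (by omega) (by omega))] at hu
      obtain ⟨c, hc0, hcs, rfl⟩ := hu
      set q : Fin k → ℕ := fun i => ⌊((k : ℝ) - 1) * c i / h⌋₊ with hq
      have hqm : m ≤ ∑ i, q i := by
        have hsumlt : (((k - 1) * r : ℕ) : ℝ) < (∑ i, (q i : ℝ)) + k := by
          have hceq : (((k - 1) * r : ℕ) : ℝ) = ∑ i, ((k : ℝ) - 1) * c i / h := by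
            rw [← Finset.sum_div, ← Finset.mul_sum, hcs]
            push_cast [Nat.cast_sub (by omega : 1 ≤ k)]
            field_simp
          rw [hceq]
          have hne : (Finset.univ : Finset (Fin k)).Nonempty := by
            refine ⟨⟨0, by omega⟩, Finset.mem_univ _⟩
          calc ∑ i, ((k : ℝ) - 1) * c i / h < ∑ i, ((q i : ℝ) + 1) :=
                Finset.sum_lt_sum_of_nonempty hne fun i _ => Nat.lt_floor_add_one _
            _ = (∑ i, (q i : ℝ)) + k := by
                rw [Finset.sum_add_distrib]
                simp
        have h2 : ((k - 1) * r : ℕ) < (∑ i, q i) + k := by exact_mod_cast hsumlt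
        exact nat_ineq r k _ hr hk2 h2
      obtain ⟨n, hnq, hnm⟩ := exists_le_sum Finset.univ q m hqm
      set x := ∑ i, (h * n i) • a i with hxdef
      have hxX : x ∈ X := hmemX n hnm
      set d : Fin k → ℝ := fun i => c i - ((h : ℝ) * n i) / ((k : ℝ) - 1) with hd
      have hd0 : ∀ i, 0 ≤ d i := by
        intro i
        have h1 : (n i : ℝ) ≤ ((k : ℝ) - 1) * c i / h :=
          le_trans (Nat.cast_le.2 (hnq i))
            (Nat.floor_le (div_nonneg (mul_nonneg hc1pos.le (hc0 i)) hh0.le))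
        have h2 : (h : ℝ) * n i ≤ ((k : ℝ) - 1) * c i := by
          have := (le_div_iff₀ hh0).1 h1
          linarith
        have h3 : ((h : ℝ) * n i) / ((k : ℝ) - 1) ≤ c i :=
          (div_le_iff₀ hc1pos).2 (by linarith)
        simp only [hd]
        linarith
      have hdsum : ∑ i, d i = (h : ℝ) := by
        have hnsr : ∑ i, (n i : ℝ) = (m : ℕ) := by exact_mod_cast hnm
        have hmr : ((m : ℕ) : ℝ) = ((r : ℝ) - 1) * ((k : ℝ) - 1) := by
          rw [hmdef]
          push_cast [Nat.cast_sub (by omega : 1 ≤ k), Nat.cast_sub (by omega : 1 ≤ r)]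
          ring
        simp only [hd]
        rw [Finset.sum_sub_distrib, hcs]
        rw [← Finset.sum_div, ← Finset.mul_sum, hnsr, hmr]
        push_cast
        field_simp
        ring
      have hbig : (∑ i, c i • a i) = ((k : ℝ) - 1)⁻¹ • x + ∑ i, d i • a i := by
        rw [hxdef, Finset.smul_sum, ← Finset.sum_add_distrib]
        refine Finset.sum_congr rfl fun i _ => ?_
        rw [← Nat.cast_smul_eq_nsmul ℝ (h * n i) (a i), smul_smul, ← add_smul]
        congr 1
        simp only [hd]
        push_cast
        field_simp
        ring
      rw [hbig]
      refine Set.add_mem_add (Set.mem_image_of_mem _ (Finset.mem_coe.2 hxX)) ?_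
      rw [hKr, hsum_convexHull a h hh]
      exact ⟨d, hd0, hdsum, rfl⟩
    -- inclusion for K'
    have hK'main : hsum (r * h) K' ⊆ ↑X + hsum h K' := by
      intro u' hu'
      rw [hK'c, hsum_image_smul] at hu'
      obtain ⟨u, hu, rfl⟩ := hu'
      obtain ⟨p, hp, v, hv, heq⟩ := Set.mem_add.1 (hKmain hu)
      obtain ⟨x, hx, rfl⟩ := hp
      have hux : (fun y => ((k : ℝ) - 1) • y) u = x + ((k : ℝ) - 1) • v := by
        show ((k : ℝ) - 1) • u = _
        rw [← heq]
        rw [smul_add]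
        rw [smul_inv_smul₀ hc1pos.ne']
      rw [hux]
      refine Set.add_mem_add hx ?_
      rw [hK'c, hsum_image_smul]
      exact ⟨v, hv, rfl⟩
    exact ⟨X, hXsub, hGsub, hcard, hKmain, hK'main⟩
  refine ⟨key, ?_, ?_⟩
  · intro r hr
    refine ⟨1, fun h hh => ?_⟩
    obtain ⟨X, -, -, hcard, hKmain, -⟩ := key r h hr hh
    refine ⟨X.image (fun x => ((k : ℝ) - 1)⁻¹ • x),
      le_trans Finset.card_image_le hcard, ?_⟩
    rw [Finset.coe_image]
    exact hKmain
  · intro r hr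
    refine ⟨1, fun h hh => ?_⟩
    obtain ⟨X, -, -, hcard, -, hK'main⟩ := key r h hr hh
    exact ⟨X, hcard, hK'main⟩
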